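/- Let μ = (μ_m) be a sequence of complex numbers and let e_k denote the k-th elementary symmetric polynomial in variables z_1,...,z_n (with e_k = 0 for k outside {0,...,n} and e_0 = 1). Then ∑_{0 ≤ i ≤ j ≤ n} μ_{j-i} e_i(z_1,...,z_n) e_j(z_1,...,z_n) = e_n(z_1,...,z_n) * ∑_{k=0}^{n} γ_k e_{n-k}(z_1 + 1/z_1, ..., z_n + 1/z_n), where γ_k = ∑_{j=0}^{⌊k/2⌋} C(k,j) μ_{k-2j}, as an identity of rational functions (valid whenever all z_i are nonzero). -/

import Mathlib

/-- The `k`-th elementary symmetric function of `z 0, …, z (n-1)`; it vanishes for `k > n`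
and `esym n z 0 = 1`. -/
noncomputable def esym (n : ℕ) (z : Fin n → ℂ) (k : ℕ) : ℂ :=
  ∑ s ∈ Finset.powersetCard k (Finset.univ : Finset (Fin n)), ∏ i ∈ s, z i

open Finset in
lemma lhs_eq (n : ℕ) (μ : ℕ → ℂ) (z : Fin n → ℂ) :
    ∑ j ∈ Finset.range (n + 1), ∑ i ∈ Finset.range (j + 1),
        μ (j - i) * esym n z i * esym n z j
    = ∑ p ∈ ((Finset.univ : Finset (Fin n)).powerset ×ˢ (Finset.univ : Finset (Fin n)).powerset).filter
        (fun p => p.1.card ≤ p.2.card),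
        μ (p.2.card - p.1.card) * (∏ i ∈ p.1, z i) * (∏ i ∈ p.2, z i) := by
  rw [Finset.sum_filter, Finset.sum_product_right, Finset.sum_powerset]
  simp only [Finset.card_univ, Fintype.card_fin]
  refine Finset.sum_congr rfl fun j hj => ?_
  rw [Finset.mem_range] at hj
  have step : ∀ i ∈ Finset.range (j+1), μ (j - i) * esym n z i * esym n z j
      = ∑ B ∈ Finset.powersetCard j (Finset.univ : Finset (Fin n)),
          μ (j - i) * esym n z i * ∏ x ∈ B, z x := by
    intro i _
    simp only [esym]
    rw [Finset.mul_sum]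
  rw [Finset.sum_congr rfl step, Finset.sum_comm]
  refine Finset.sum_congr rfl fun B hB => ?_
  rw [Finset.mem_powersetCard_univ] at hB
  rw [Finset.sum_powerset]
  simp only [Finset.card_univ, Fintype.card_fin]
  rw [show Finset.range (j+1) = (Finset.range (n+1)).filter (fun i => i ≤ j) by
    ext x; simp only [Finset.mem_filter, Finset.mem_range]; omega]
  rw [Finset.sum_filter]
  refine Finset.sum_congr rfl fun i hi => ?_
  by_cases h : i ≤ j
  · simp only [h, if_true]
    rw [esym, Finset.mul_sum, Finset.sum_mul]
    refine Finset.sum_congr rfl fun A hA => ?_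
    rw [Finset.mem_powersetCard_univ] at hA
    rw [hA, hB, if_pos h]
  · simp only [h, if_false]
    rw [Finset.sum_eq_zero]
    intro A hA
    rw [Finset.mem_powersetCard_univ] at hA
    rw [hA, hB, if_neg h]

open Finset in
lemma r1 (n k : ℕ) (hk : k ≤ n) (z : Fin n → ℂ) (hz : ∀ i, z i ≠ 0) :
    (∏ i, z i) * esym n (fun i => z i + (z i)⁻¹) (n - k)
    = ∑ U ∈ Finset.powersetCard k (Finset.univ : Finset (Fin n)),
        ∑ T ∈ Uᶜ.powerset, (∏ i ∈ U, z i) * ((∏ i ∈ T, z i) * (∏ i ∈ T, z i)) := by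
  rw [esym, Finset.mul_sum]
  refine Finset.sum_nbij' (fun S => Sᶜ) (fun U => Uᶜ) ?_ ?_ ?_ ?_ ?_
  · intro S hS
    rw [Finset.mem_powersetCard_univ] at hS ⊢
    rw [Finset.card_compl, hS, Fintype.card_fin]
    omega
  · intro U hU
    rw [Finset.mem_powersetCard_univ] at hU ⊢
    rw [Finset.card_compl, hU, Fintype.card_fin]
  · intro S _; exact compl_compl S
  · intro U _; exact compl_compl U
  · intro S hS
    rw [Finset.mem_powersetCard_univ] at hS
    rw [Finset.prod_add, Finset.mul_sum, compl_compl]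
    refine Finset.sum_congr rfl fun T hT => ?_
    rw [Finset.mem_powerset] at hT
    have h1 : (∏ i, z i) = (∏ i ∈ Sᶜ, z i) * ∏ i ∈ S, z i := by
      rw [← Finset.prod_sdiff (Finset.subset_univ S), Finset.compl_eq_univ_sdiff]
    have h2 : (∏ i ∈ S, z i) = (∏ i ∈ S \ T, z i) * ∏ i ∈ T, z i :=
      (Finset.prod_sdiff hT).symm
    have h3 : (∏ i ∈ S \ T, z i) * (∏ i ∈ S \ T, (z i)⁻¹) = 1 := by
      rw [← Finset.prod_mul_distrib]
      exact Finset.prod_eq_one fun i _ => mul_inv_cancel₀ (hz i)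
    calc (∏ i, z i) * ((∏ i ∈ T, z i) * ∏ i ∈ S \ T, (z i)⁻¹)
        = (∏ i ∈ Sᶜ, z i) * ((∏ i ∈ T, z i) * ∏ i ∈ T, z i) *
            ((∏ i ∈ S \ T, z i) * (∏ i ∈ S \ T, (z i)⁻¹)) := by rw [h1, h2]; ring
      _ = _ := by rw [h3, mul_one]

open Finset in
lemma gamma_eq {n : ℕ} (μ : ℕ → ℂ) (k : ℕ) (U : Finset (Fin n)) (hU : U.card = k) :
    ∑ j ∈ Finset.range (k / 2 + 1), (k.choose j : ℂ) * μ (k - 2 * j)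
    = ∑ X ∈ U.powerset.filter (fun X => 2 * X.card ≤ k), μ (k - 2 * X.card) := by
  rw [Finset.sum_filter, Finset.sum_powerset, hU]
  have : ∀ j ∈ Finset.range (k + 1),
      (∑ X ∈ Finset.powersetCard j U, if 2 * X.card ≤ k then μ (k - 2 * X.card) else 0)
      = if 2 * j ≤ k then (k.choose j : ℂ) * μ (k - 2 * j) else 0 := by
    intro j hj
    have hcard : ∀ X ∈ Finset.powersetCard j U, (if 2 * X.card ≤ k then μ (k - 2 * X.card) else 0)
        = if 2 * j ≤ k then μ (k - 2 * j) else 0 := by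
      intro X hX
      rw [(Finset.mem_powersetCard.mp hX).2]
    rw [Finset.sum_congr rfl hcard, Finset.sum_const, Finset.card_powersetCard, hU,
      nsmul_eq_mul]
    by_cases h : 2 * j ≤ k
    · simp [h]
    · simp [h]
  rw [Finset.sum_congr rfl this]
  rw [show Finset.range (k/2+1) = (Finset.range (k+1)).filter (fun j => 2*j ≤ k) by
    ext x; simp only [Finset.mem_filter, Finset.mem_range]; omega]
  rw [Finset.sum_filter]

open Finset in
lemma flatten (n : ℕ) (f : Finset (Fin n) → Finset (Fin n) → Finset (Fin n) → ℂ) :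
    ∑ U ∈ (Finset.univ : Finset (Fin n)).powerset,
      ∑ X ∈ U.powerset.filter (fun X => 2 * X.card ≤ U.card),
        ∑ T ∈ Uᶜ.powerset, f U X T
    = ∑ q ∈ ((((Finset.univ : Finset (Fin n)).powerset ×ˢ (Finset.univ : Finset (Fin n)).powerset)
          ×ˢ (Finset.univ : Finset (Fin n)).powerset).filter
          (fun q => q.1.2 ⊆ q.1.1 ∧ 2 * q.1.2.card ≤ q.1.1.card ∧ q.2 ⊆ q.1.1ᶜ)),
        f q.1.1 q.1.2 q.2 := by
  rw [Finset.sum_filter, Finset.sum_product, Finset.sum_product]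
  refine Finset.sum_congr rfl fun U hU => ?_
  rw [eq_comm]
  calc ∑ X ∈ (Finset.univ : Finset (Fin n)).powerset,
        ∑ T ∈ (Finset.univ : Finset (Fin n)).powerset,
          (if X ⊆ U ∧ 2 * X.card ≤ U.card ∧ T ⊆ Uᶜ then f U X T else 0)
      = ∑ X ∈ (Finset.univ : Finset (Fin n)).powerset,
          (if X ⊆ U ∧ 2 * X.card ≤ U.card then ∑ T ∈ Uᶜ.powerset, f U X T else 0) := by
        refine Finset.sum_congr rfl fun X _ => ?_
        by_cases hc : X ⊆ U ∧ 2 * X.card ≤ U.card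
        · rw [if_pos hc]
          have : ∀ T ∈ (Finset.univ : Finset (Fin n)).powerset,
              (if X ⊆ U ∧ 2 * X.card ≤ U.card ∧ T ⊆ Uᶜ then f U X T else 0)
              = if T ⊆ Uᶜ then f U X T else 0 := by
            intro T _
            by_cases h : T ⊆ Uᶜ
            · rw [if_pos ⟨hc.1, hc.2, h⟩, if_pos h]
            · rw [if_neg (by tauto), if_neg h]
          rw [Finset.sum_congr rfl this, ← Finset.sum_filter,
            show (Finset.univ : Finset (Fin n)).powerset.filter (fun T => T ⊆ Uᶜ) = Uᶜ.powerset by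
              ext x; simp]
        · rw [if_neg hc]
          exact Finset.sum_eq_zero fun T _ => if_neg (by tauto)
    _ = ∑ X ∈ U.powerset.filter (fun X => 2 * X.card ≤ U.card), ∑ T ∈ Uᶜ.powerset, f U X T := by
        rw [← Finset.sum_filter,
          show (Finset.univ : Finset (Fin n)).powerset.filter
              (fun X => X ⊆ U ∧ 2 * X.card ≤ U.card)
            = U.powerset.filter (fun X => 2 * X.card ≤ U.card) by
            ext x; simp [and_assoc]]

lemma rhs_eq (n : ℕ) (μ : ℕ → ℂ) (z : Fin n → ℂ) (hz : ∀ i, z i ≠ 0) :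
    esym n z n *
        ∑ k ∈ Finset.range (n + 1),
          (∑ j ∈ Finset.range (k / 2 + 1), (k.choose j : ℂ) * μ (k - 2 * j)) *
            esym n (fun i => z i + (z i)⁻¹) (n - k)
    = ∑ q ∈ ((((Finset.univ : Finset (Fin n)).powerset ×ˢ (Finset.univ : Finset (Fin n)).powerset)
          ×ˢ (Finset.univ : Finset (Fin n)).powerset).filter
          (fun q => q.1.2 ⊆ q.1.1 ∧ 2 * q.1.2.card ≤ q.1.1.card ∧ q.2 ⊆ q.1.1ᶜ)),
        μ (q.1.1.card - 2 * q.1.2.card) * (∏ i ∈ q.1.1, z i) *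
          ((∏ i ∈ q.2, z i) * (∏ i ∈ q.2, z i)) := by
  have hesn : esym n z n = ∏ i, z i := by
    rw [esym, show Finset.powersetCard n (Finset.univ : Finset (Fin n)) = {Finset.univ} from by
      simpa using Finset.powersetCard_self (Finset.univ : Finset (Fin n))]
    simp
  rw [hesn, Finset.mul_sum,
    ← flatten n (fun U X T => μ (U.card - 2 * X.card) * (∏ i ∈ U, z i) *
      ((∏ i ∈ T, z i) * (∏ i ∈ T, z i)))]
  have step1 : ∀ k ∈ Finset.range (n + 1),
      (∏ i, z i) * ((∑ j ∈ Finset.range (k / 2 + 1), (k.choose j : ℂ) * μ (k - 2 * j)) *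
          esym n (fun i => z i + (z i)⁻¹) (n - k))
      = ∑ U ∈ Finset.powersetCard k (Finset.univ : Finset (Fin n)),
          ∑ X ∈ U.powerset.filter (fun X => 2 * X.card ≤ U.card),
            ∑ T ∈ Uᶜ.powerset,
              μ (U.card - 2 * X.card) * (∏ i ∈ U, z i) *
                ((∏ i ∈ T, z i) * (∏ i ∈ T, z i)) := by
    intro k hk
    rw [Finset.mem_range] at hk
    rw [mul_left_comm, r1 n k (by omega) z hz, Finset.mul_sum]
    refine Finset.sum_congr rfl fun U hU => ?_
    rw [Finset.mem_powersetCard_univ] at hU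
    rw [gamma_eq μ k U hU, Finset.sum_mul, hU]
    refine Finset.sum_congr rfl fun X _ => ?_
    rw [Finset.mul_sum]
    refine Finset.sum_congr rfl fun T _ => ?_
    ring
  rw [Finset.sum_congr rfl step1]
  rw [Finset.sum_powerset]
  simp only [Finset.card_univ, Fintype.card_fin]

open Finset in
lemma bij (n : ℕ) (μ : ℕ → ℂ) (z : Fin n → ℂ) :
    ∑ p ∈ ((Finset.univ : Finset (Fin n)).powerset ×ˢ (Finset.univ : Finset (Fin n)).powerset).filter
        (fun p => p.1.card ≤ p.2.card),
        μ (p.2.card - p.1.card) * (∏ i ∈ p.1, z i) * (∏ i ∈ p.2, z i)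
    = ∑ q ∈ ((((Finset.univ : Finset (Fin n)).powerset ×ˢ (Finset.univ : Finset (Fin n)).powerset)
          ×ˢ (Finset.univ : Finset (Fin n)).powerset).filter
          (fun q => q.1.2 ⊆ q.1.1 ∧ 2 * q.1.2.card ≤ q.1.1.card ∧ q.2 ⊆ q.1.1ᶜ)),
        μ (q.1.1.card - 2 * q.1.2.card) * (∏ i ∈ q.1.1, z i) *
          ((∏ i ∈ q.2, z i) * (∏ i ∈ q.2, z i)) := by
  refine Finset.sum_nbij'
    (fun p => (((p.1 \ p.2) ∪ (p.2 \ p.1), p.1 \ p.2), p.1 ∩ p.2))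
    (fun q => (q.2 ∪ q.1.2, q.2 ∪ (q.1.1 \ q.1.2))) ?_ ?_ ?_ ?_ ?_
  · intro p hp
    rw [Finset.mem_filter] at hp
    obtain ⟨-, hple⟩ := hp
    rw [Finset.mem_filter]
    refine ⟨by simp, Finset.subset_union_left, ?_, ?_⟩
    · dsimp only
      rw [Finset.card_union_of_disjoint (disjoint_sdiff_sdiff)]
      have h1 := Finset.card_inter_add_card_sdiff p.1 p.2
      have h2 := Finset.card_inter_add_card_sdiff p.2 p.1
      rw [Finset.inter_comm p.2 p.1] at h2
      omega
    · intro x hx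
      simp only [Finset.mem_inter] at hx
      simp only [Finset.mem_compl, Finset.mem_union, Finset.mem_sdiff]
      tauto
  · intro q hq
    rw [Finset.mem_filter] at hq
    obtain ⟨-, hXU, hcard, hTU⟩ := hq
    rw [Finset.mem_filter]
    refine ⟨by simp, ?_⟩
    have hdTX : Disjoint q.2 q.1.2 := by
      rw [Finset.disjoint_left]
      intro x hxT hxX
      exact (Finset.mem_compl.mp (hTU hxT)) (hXU hxX)
    have hdTU : Disjoint q.2 (q.1.1 \ q.1.2) := by
      rw [Finset.disjoint_left]
      intro x hxT hxU
      exact (Finset.mem_compl.mp (hTU hxT)) (Finset.mem_sdiff.mp hxU).1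
    rw [Finset.card_union_of_disjoint hdTX, Finset.card_union_of_disjoint hdTU,
      Finset.card_sdiff_of_subset hXU]
    have := Finset.card_le_card hXU
    omega
  · intro p hp
    dsimp only
    rw [Finset.mem_filter] at hp
    refine Prod.ext ?_ ?_
    · show p.1 ∩ p.2 ∪ p.1 \ p.2 = p.1
      ext x; simp only [Finset.mem_union, Finset.mem_inter, Finset.mem_sdiff]; tauto
    · show p.1 ∩ p.2 ∪ (p.1 \ p.2 ∪ p.2 \ p.1) \ (p.1 \ p.2) = p.2
      ext x
      simp only [Finset.mem_union, Finset.mem_inter, Finset.mem_sdiff]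
      tauto
  · intro q hq
    dsimp only
    rw [Finset.mem_filter] at hq
    obtain ⟨-, hXU, hcard, hTU⟩ := hq
    have hX : ∀ x ∈ q.1.2, x ∈ q.1.1 := fun x hx => hXU hx
    have hT : ∀ x ∈ q.2, x ∉ q.1.1 := fun x hx => Finset.mem_compl.mp (hTU hx)
    refine Prod.ext (Prod.ext ?_ ?_) ?_
    · show (q.2 ∪ q.1.2) \ (q.2 ∪ q.1.1 \ q.1.2) ∪ (q.2 ∪ q.1.1 \ q.1.2) \ (q.2 ∪ q.1.2) = q.1.1
      ext x
      simp only [Finset.mem_union, Finset.mem_sdiff, not_or, Finset.mem_union]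
      constructor
      · rintro (⟨h1, h2, h3⟩ | ⟨h1, h2, h3⟩)
        · rcases h1 with h1 | h1
          · exact absurd h1 h2
          · exact hX _ h1
        · rcases h1 with h1 | h1
          · exact absurd h1 h2
          · exact h1.1
      · intro hx
        by_cases hxX : x ∈ q.1.2
        · exact Or.inl ⟨Or.inr hxX, fun h => hT _ h hx, fun h => h.2 hxX⟩
        · exact Or.inr ⟨Or.inr ⟨hx, hxX⟩, fun h => hT _ h hx, hxX⟩
    · show (q.2 ∪ q.1.2) \ (q.2 ∪ q.1.1 \ q.1.2) = q.1.2
      ext x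
      simp only [Finset.mem_union, Finset.mem_sdiff, not_or, Finset.mem_union]
      constructor
      · rintro ⟨h1 | h1, h2, h3⟩
        · exact absurd h1 h2
        · exact h1
      · intro hx
        exact ⟨Or.inr hx, fun h => hT _ h (hX _ hx), fun h => h.2 hx⟩
    · show (q.2 ∪ q.1.2) ∩ (q.2 ∪ q.1.1 \ q.1.2) = q.2
      ext x
      simp only [Finset.mem_inter, Finset.mem_union, Finset.mem_sdiff]
      constructor
      · rintro ⟨h1 | h1, h2 | h2⟩
        · exact h1
        · exact h1
        · exact h2
        · exact absurd h1 h2.2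
      · intro hx; exact ⟨Or.inl hx, Or.inl hx⟩
  · intro p hp
    dsimp only
    rw [Finset.mem_filter] at hp
    obtain ⟨-, hple⟩ := hp
    have h1 := Finset.card_inter_add_card_sdiff p.1 p.2
    have h2 := Finset.card_inter_add_card_sdiff p.2 p.1
    rw [Finset.inter_comm p.2 p.1] at h2
    have hd12 : Disjoint (p.1 ∩ p.2) (p.1 \ p.2) := by
      rw [Finset.disjoint_left]; intro x hx hx'
      exact (Finset.mem_sdiff.mp hx').2 (Finset.mem_inter.mp hx).2
    have hd21 : Disjoint (p.1 ∩ p.2) (p.2 \ p.1) := by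
      rw [Finset.disjoint_left]; intro x hx hx'
      exact (Finset.mem_sdiff.mp hx').2 (Finset.mem_inter.mp hx).1
    have e1 : (∏ i ∈ p.1, z i) = (∏ i ∈ p.1 ∩ p.2, z i) * ∏ i ∈ p.1 \ p.2, z i := by
      rw [← Finset.prod_union hd12]
      congr 1
      ext x; simp only [Finset.mem_union, Finset.mem_inter, Finset.mem_sdiff]; tauto
    have e2 : (∏ i ∈ p.2, z i) = (∏ i ∈ p.1 ∩ p.2, z i) * ∏ i ∈ p.2 \ p.1, z i := by
      rw [← Finset.prod_union hd21]
      congr 1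
      ext x; simp only [Finset.mem_union, Finset.mem_inter, Finset.mem_sdiff]; tauto
    have e3 : (∏ i ∈ (p.1 \ p.2) ∪ (p.2 \ p.1), z i)
        = (∏ i ∈ p.1 \ p.2, z i) * ∏ i ∈ p.2 \ p.1, z i :=
      Finset.prod_union disjoint_sdiff_sdiff
    have hμ : p.2.card - p.1.card
        = ((p.1 \ p.2) ∪ (p.2 \ p.1)).card - 2 * (p.1 \ p.2).card := by
      rw [Finset.card_union_of_disjoint disjoint_sdiff_sdiff]
      omega
    show μ (p.2.card - p.1.card) * (∏ i ∈ p.1, z i) * (∏ i ∈ p.2, z i)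
      = μ (((p.1 \ p.2) ∪ (p.2 \ p.1)).card - 2 * (p.1 \ p.2).card) *
          (∏ i ∈ (p.1 \ p.2) ∪ (p.2 \ p.1), z i) *
          ((∏ i ∈ p.1 ∩ p.2, z i) * ∏ i ∈ p.1 ∩ p.2, z i)
    rw [hμ, e1, e2, e3]
    ring

/-- Brändén's symmetric function identity. -/
theorem branden_identity (n : ℕ) (hn : 0 < n) (μ : ℕ → ℂ) (z : Fin n → ℂ)
    (hz : ∀ i, z i ≠ 0) :
    ∑ j ∈ Finset.range (n + 1), ∑ i ∈ Finset.range (j + 1),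
        μ (j - i) * esym n z i * esym n z j =
      esym n z n *
        ∑ k ∈ Finset.range (n + 1),
          (∑ j ∈ Finset.range (k / 2 + 1), (k.choose j : ℂ) * μ (k - 2 * j)) *
            esym n (fun i => z i + (z i)⁻¹) (n - k) := by
  rw [lhs_eq n μ z, bij n μ z]
  exact (rhs_eq n μ z hz).symm
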